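/- For every n ≥ 3, the set Λ × F_5^(n-3) ⊆ F_5^n is sum-free, has cardinality 28·5^(n-3), and is not normal; hence sf_1(F_5^n) ≥ 28·5^(n-3). -/

import Mathlib

/-- The Lev–Versteegen set `Λ ⊆ F_5^3`. -/
def Lam : Set (ZMod 5 × ZMod 5 × ZMod 5) :=
  {p | (p.1, p.2.1) ∈ ({(1, 0), (-1, 0), (0, 1), (0, -1)} : Set (ZMod 5 × ZMod 5))} ∪
    {(-1, 2, 0), (-1, 2, 1), (2, 1, 1), (2, 1, 2),
      (1, -2, 0), (1, -2, -1), (-2, -1, -1), (-2, -1, -2)}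

/-- The extension `Λ × F_5^{n-3} ⊆ F_5^n`: the first three coordinates lie in `Λ`,
the remaining ones are arbitrary. -/
def LamExt (n : ℕ) (hn : 3 ≤ n) : Set (Fin n → ZMod 5) :=
  {x | (x ⟨0, by omega⟩, x ⟨1, by omega⟩, x ⟨2, by omega⟩) ∈ Lam}

/-- `A` is normal: contained in `H ∪ (-H)` for an affine hyperplane `H` avoiding `0`. -/
def IsNormal (n : ℕ) (A : Set (Fin n → ZMod 5)) : Prop :=
  ∃ (φ : (Fin n → ZMod 5) →ₗ[ZMod 5] ZMod 5) (c : ZMod 5),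
    Function.Surjective φ ∧ c ≠ 0 ∧ A ⊆ {x | φ x = c ∨ φ x = -c}

/-! ### Auxiliary decidable description of `Lam` -/

def LamPred (p : ZMod 5 × ZMod 5 × ZMod 5) : Prop :=
  ((p.1, p.2.1) = (1, 0) ∨ (p.1, p.2.1) = (-1, 0) ∨ (p.1, p.2.1) = (0, 1) ∨ (p.1, p.2.1) = (0, -1))
  ∨ (p = (-1, 2, 0) ∨ p = (-1, 2, 1) ∨ p = (2, 1, 1) ∨ p = (2, 1, 2) ∨
     p = (1, -2, 0) ∨ p = (1, -2, -1) ∨ p = (-2, -1, -1) ∨ p = (-2, -1, -2))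

instance : DecidablePred LamPred := fun p => by unfold LamPred; infer_instance

lemma mem_Lam_iff (p : ZMod 5 × ZMod 5 × ZMod 5) : p ∈ Lam ↔ LamPred p := by
  simp only [Lam, LamPred, Set.mem_union, Set.mem_setOf_eq, Set.mem_insert_iff,
    Set.mem_singleton_iff]

instance : DecidablePred (· ∈ Lam) := fun p => decidable_of_iff _ (mem_Lam_iff p).symm

set_option maxRecDepth 10000 in
lemma lam_sumfree : ∀ p q : ZMod 5 × ZMod 5 × ZMod 5,
    LamPred p → LamPred q → ¬ LamPred (p + q) := by decide

set_option maxRecDepth 10000 in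
lemma lam_key : ∀ a b d c : ZMod 5, c ≠ 0 →
    ¬ (∀ p : ZMod 5 × ZMod 5 × ZMod 5, LamPred p →
        (p.1 * a + p.2.1 * b + p.2.2 * d = c ∨ p.1 * a + p.2.1 * b + p.2.2 * d = -c)) := by
  decide

/-! ### Points of `LamExt` supported on the first three coordinates -/

def vec (n : ℕ) (p q r : ZMod 5) : Fin n → ZMod 5 :=
  fun i => if i.val = 0 then p else if i.val = 1 then q else if i.val = 2 then r else 0

lemma vec_mem (n : ℕ) (hn : 3 ≤ n) (p q r : ZMod 5) :
    vec n p q r ∈ LamExt n hn ↔ (p, q, r) ∈ Lam := Iff.rfl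

lemma vec_eq (n : ℕ) (p q r : ZMod 5) :
    vec n p q r = p • vec n 1 0 0 + q • vec n 0 1 0 + r • vec n 0 0 1 := by
  funext i
  simp only [vec, Pi.add_apply, Pi.smul_apply, smul_eq_mul]
  split_ifs <;> ring

/-! ### Counting -/

def Lam3 : Set (Fin 3 → ZMod 5) := {u | (u 0, u 1, u 2) ∈ Lam}

noncomputable def E (n m : ℕ) (hm : n = 3 + m) :
    (Fin n → ZMod 5) ≃ ((Fin 3 → ZMod 5) × (Fin m → ZMod 5)) :=
  ((Equiv.arrowCongr (finCongr hm) (Equiv.refl _)).trans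
    (Equiv.arrowCongr finSumFinEquiv.symm (Equiv.refl _))).trans
    (Equiv.sumArrowEquivProdArrow _ _ _)

lemma mem_ext_iff (n m : ℕ) (hn : 3 ≤ n) (hm : n = 3 + m) (x : Fin n → ZMod 5) :
    x ∈ LamExt n hn ↔ (E n m hm x).1 ∈ Lam3 := Iff.rfl

instance : DecidablePred (· ∈ Lam3) := fun u => inferInstanceAs (Decidable ((u 0, u 1, u 2) ∈ Lam))

set_option maxRecDepth 20000 in
lemma lam3_card : Nat.card ↥Lam3 = 28 := by
  rw [Nat.card_eq_fintype_card]
  rw [show (28 : ℕ) = (Finset.univ.filter (· ∈ Lam3)).card from by decide]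
  exact Fintype.card_subtype _

lemma card_LamExt (n : ℕ) (hn : 3 ≤ n) : (LamExt n hn).ncard = 28 * 5 ^ (n - 3) := by
  set m := n - 3 with hm'
  have hm : n = 3 + m := by omega
  have h1 : LamExt n hn = (E n m hm) ⁻¹' (Lam3 ×ˢ Set.univ) := by
    ext x
    simp [mem_ext_iff n m hn hm x, Set.mem_preimage]
  rw [h1, ← Equiv.image_symm_eq_preimage,
    Set.ncard_image_of_injective _ (Equiv.injective _),
    ← Nat.card_coe_set_eq, Nat.card_congr (Equiv.Set.prod _ _), Nat.card_prod]
  rw [lam3_card]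
  congr 1
  rw [Nat.card_congr (Equiv.Set.univ _), Nat.card_eq_fintype_card, Fintype.card_fun,
    ZMod.card, Fintype.card_fin]

/-! ### Sum-freeness and non-normality -/

lemma sumfree_LamExt (n : ℕ) (hn : 3 ≤ n) :
    ∀ x ∈ LamExt n hn, ∀ y ∈ LamExt n hn, x + y ∉ LamExt n hn := by
  intro x hx y hy hxy
  have hx' := (mem_Lam_iff _).mp hx
  have hy' := (mem_Lam_iff _).mp hy
  have hxy' := (mem_Lam_iff _).mp hxy
  exact lam_sumfree (x ⟨0, by omega⟩, x ⟨1, by omega⟩, x ⟨2, by omega⟩)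
    (y ⟨0, by omega⟩, y ⟨1, by omega⟩, y ⟨2, by omega⟩) hx' hy' hxy'

lemma not_normal_LamExt (n : ℕ) (hn : 3 ≤ n) : ¬ IsNormal n (LamExt n hn) := by
  rintro ⟨φ, c, _, hc, hsub⟩
  apply lam_key (φ (vec n 1 0 0)) (φ (vec n 0 1 0)) (φ (vec n 0 0 1)) c hc
  intro p hp
  have hmem : vec n p.1 p.2.1 p.2.2 ∈ LamExt n hn := by
    rw [vec_mem]
    exact (mem_Lam_iff _).mpr hp
  have h := hsub hmem
  have hφ : φ (vec n p.1 p.2.1 p.2.2) =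
      p.1 * φ (vec n 1 0 0) + p.2.1 * φ (vec n 0 1 0) + p.2.2 * φ (vec n 0 0 1) := by
    rw [vec_eq n p.1 p.2.1 p.2.2, map_add, map_add, map_smul, map_smul, map_smul,
      smul_eq_mul, smul_eq_mul, smul_eq_mul]
  simp only [Set.mem_setOf_eq] at h
  rwa [hφ] at h

theorem stmt_19 (n : ℕ) (hn : 3 ≤ n) :
    (∀ x ∈ LamExt n hn, ∀ y ∈ LamExt n hn, x + y ∉ LamExt n hn) ∧
      (LamExt n hn).ncard = 28 * 5 ^ (n - 3) ∧
      ¬ IsNormal n (LamExt n hn) ∧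
      ∃ B : Set (Fin n → ZMod 5),
        (∀ x ∈ B, ∀ y ∈ B, x + y ∉ B) ∧ ¬ IsNormal n B ∧
          28 * 5 ^ (n - 3) ≤ B.ncard :=
  ⟨sumfree_LamExt n hn, card_LamExt n hn, not_normal_LamExt n hn,
    ⟨LamExt n hn, sumfree_LamExt n hn, not_normal_LamExt n hn, (card_LamExt n hn).ge⟩⟩
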